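/- Let C ⊆ Y be a nonempty compact subset, and assume in addition that for every compact K ⊆ Y only finitely many connected components of Y ∖ J·C have closure meeting K (this holds automatically in the paper's setting, where Y is a locally finite CW complex and C a finite subcomplex). Let U be a J-unbounded connected component of Y ∖ J·C. Then the stabilizer {j ∈ J : j • U = U} of U is an infinite subgroup of J. -/

import Mathlib

open Pointwise

/-- A subset of a topological space is *bounded* if it is contained in some compact set. -/
def BoundedSubset {X : Type*} [TopologicalSpace X] (S : Set X) : Prop :=
  ∃ K : Set X, IsCompact K ∧ S ⊆ K

/-- `U` is a connected component of the subspace `F` (of the ambient space `X`). -/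
def IsComponentOf {X : Type*} [TopologicalSpace X] (F U : Set X) : Prop :=
  ∃ x ∈ F, U = connectedComponentIn F x

/-- For `A ⊆ Y`, `orbitUnion J A` is `J·A = ⋃_{j ∈ J} j • A`. -/
def orbitUnion (J : Type*) {Y : Type*} [SMul J Y] (A : Set Y) : Set Y :=
  ⋃ j : J, j • A

/-- A subset of `Y` is `J`-bounded if it is contained in `J·D` for some compact `D ⊆ Y`. -/
def JBounded (J : Type*) {Y : Type*} [TopologicalSpace Y] [SMul J Y] (S : Set Y) : Prop :=
  ∃ D : Set Y, IsCompact D ∧ S ⊆ orbitUnion J D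

/-- `Y` is one-ended: it is not compact, and for every compact `K ⊆ Y` exactly one
connected component of `Y ∖ K` is unbounded. -/
def OneEnded (Y : Type*) [TopologicalSpace Y] : Prop :=
  ¬ IsCompact (Set.univ : Set Y) ∧
    ∀ K : Set Y, IsCompact K →
      ∃! U : Set Y, IsComponentOf Kᶜ U ∧ ¬ BoundedSubset U

/-- A nonempty preconnected set which is open and relatively closed in `S` is the
connected component in `S` of each of its points. -/
lemma connectedComponentIn_eq_of_clopen {Y : Type*} [TopologicalSpace Y] {S U : Set Y}
    (hUS : U ⊆ S) (hUo : IsOpen U) (hUcl : closure U ∩ S ⊆ U)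
    (hUconn : IsPreconnected U) {u : Y} (hu : u ∈ U) :
    connectedComponentIn S u = U := by
  apply subset_antisymm
  · exact isPreconnected_connectedComponentIn.subset_of_closure_inter_subset hUo
      ⟨u, mem_connectedComponentIn (hUS hu), hu⟩
      (fun x hx => hUcl ⟨hx.1, connectedComponentIn_subset S u hx.2⟩)
  · exact hUconn.subset_connectedComponentIn hu hUS

theorem stmt9 {Y : Type*} [TopologicalSpace Y] [ConnectedSpace Y]
    [LocallyCompactSpace Y] [LocallyConnectedSpace Y] [T2Space Y]
    (hY : OneEnded Y)
    {J : Type*} [Group J] [Infinite J] [MulAction J Y]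
    (hcont : ∀ j : J, Continuous fun y : Y => j • y)
    (hpd : ∀ K : Set Y, IsCompact K → {j : J | ((j • K) ∩ K).Nonempty}.Finite)
    (C : Set Y) (hCne : C.Nonempty) (hC : IsCompact C)
    (hloc : ∀ K : Set Y, IsCompact K →
      {V : Set Y | IsComponentOf (orbitUnion J C)ᶜ V ∧ (closure V ∩ K).Nonempty}.Finite)
    (U : Set Y) (hU : IsComponentOf (orbitUnion J C)ᶜ U)
    (hUnb : ¬ JBounded J U) :
    {j : J | j • U = U}.Infinite := by
  classical
  haveI : ContinuousConstSMul J Y := ⟨hcont⟩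
  set F : Set Y := (orbitUnion J C)ᶜ with hFdef
  obtain ⟨x₀, hx₀F, hUeq⟩ := hU
  -- membership in the orbit union
  have hmemOrb : ∀ {y : Y}, y ∈ orbitUnion J C ↔ ∃ i : J, i⁻¹ • y ∈ C := by
    intro y
    simp [orbitUnion, Set.mem_iUnion, Set.mem_smul_set_iff_inv_smul_mem]
  -- the orbit union is J-invariant
  have horb : ∀ j : J, j • orbitUnion J C = orbitUnion J C := by
    intro j
    ext y
    rw [Set.mem_smul_set_iff_inv_smul_mem, hmemOrb, hmemOrb]
    constructor
    · rintro ⟨i, hi⟩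
      refine ⟨j * i, ?_⟩
      rwa [mul_inv_rev, mul_smul]
    · rintro ⟨i, hi⟩
      refine ⟨j⁻¹ * i, ?_⟩
      rwa [mul_inv_rev, inv_inv, mul_smul, smul_inv_smul]
  have hFinv : ∀ j : J, j • F = F := by
    intro j
    rw [hFdef, Set.smul_set_compl, horb]
  -- translating connected components in F
  have hcompSmul : ∀ (j : J) (x : Y), x ∈ F →
      j • connectedComponentIn F x = connectedComponentIn F (j • x) := by
    intro j x hx
    have h := (Homeomorph.smul (α := Y) j).image_connectedComponentIn (s := F) hx
    simpa [hFinv j] using h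
  -- the orbit union is closed
  have horbClosed : IsClosed (orbitUnion J C) := by
    rw [← isOpen_compl_iff, isOpen_iff_forall_mem_open]
    intro y hy
    obtain ⟨L, hLcomp, hLmem⟩ := exists_compact_mem_nhds y
    have hfin : {j : J | ((j • C) ∩ L).Nonempty}.Finite := by
      apply (hpd (C ∪ L) (hC.union hLcomp)).subset
      rintro j ⟨z, hz1, hz2⟩
      exact ⟨z, by rw [Set.smul_set_union]; exact Or.inl hz1, Or.inr hz2⟩
    set B := ⋃ j ∈ {j : J | ((j • C) ∩ L).Nonempty}, j • C with hBdef
    have hBclosed : IsClosed B :=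
      hfin.isClosed_biUnion (fun j _ => ((hC.smul j).isClosed))
    have h1 : interior L \ B ⊆ (orbitUnion J C)ᶜ := by
      rintro z ⟨hz1, hz2⟩ hzorb
      obtain ⟨i, hi⟩ := hmemOrb.mp hzorb
      exact hz2 (Set.mem_biUnion ⟨z, Set.mem_smul_set_iff_inv_smul_mem.2 hi,
        interior_subset hz1⟩ (Set.mem_smul_set_iff_inv_smul_mem.2 hi))
    have h2 : y ∈ interior L \ B := by
      refine ⟨mem_interior_iff_mem_nhds.mpr hLmem, fun hyB => ?_⟩
      obtain ⟨i, hiset, hyi⟩ := Set.mem_iUnion₂.mp hyB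
      exact hy (hmemOrb.mpr ⟨i, Set.mem_smul_set_iff_inv_smul_mem.1 hyi⟩)
    exact ⟨interior L \ B, h1, isOpen_interior.sdiff hBclosed, h2⟩
  have hFopen : IsOpen F := horbClosed.isOpen_compl
  -- basic properties of U
  have hUopen : IsOpen U := hUeq ▸ hFopen.connectedComponentIn
  have hUconn : IsPreconnected U := hUeq ▸ isPreconnected_connectedComponentIn
  have hUF : U ⊆ F := hUeq ▸ connectedComponentIn_subset F x₀
  have hUne : U.Nonempty := ⟨x₀, hUeq ▸ mem_connectedComponentIn hx₀F⟩
  -- U is relatively closed in F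
  have hUcl : closure U ∩ F ⊆ U := by
    rintro x ⟨hxc, hxF⟩
    set N := connectedComponentIn F x with hNdef
    have hNopen : IsOpen N := hFopen.connectedComponentIn
    have hxN : x ∈ N := mem_connectedComponentIn hxF
    obtain ⟨u, huN, huU⟩ := mem_closure_iff.mp hxc N hNopen hxN
    have h1 : connectedComponentIn F x₀ = connectedComponentIn F u :=
      connectedComponentIn_eq (hUeq ▸ huU)
    have h2 : N ⊆ connectedComponentIn F u :=
      isPreconnected_connectedComponentIn.subset_connectedComponentIn huN
        (connectedComponentIn_subset F x)
    rw [hUeq, h1]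
    exact h2 hxN
  -- U is not bounded
  have hUnbd : ¬ BoundedSubset U := by
    rintro ⟨D, hD, hsub⟩
    refine hUnb ⟨D, hD, hsub.trans ?_⟩
    intro z hz
    exact Set.mem_iUnion.mpr ⟨1, by simpa using hz⟩
  -- every translate of U is a component of F
  have hUj : ∀ j : J, j • U = connectedComponentIn F (j • x₀) := by
    intro j
    rw [hUeq]; exact hcompSmul j x₀ hx₀F
  have hx₀jF : ∀ j : J, j • x₀ ∈ F := by
    intro j
    have h := hFinv j
    rw [← h]
    exact Set.smul_mem_smul_set hx₀F
  -- translates of U are unbounded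
  have hUjnbd : ∀ j : J, ¬ BoundedSubset (j • U) := by
    rintro j ⟨D, hD, hsub⟩
    refine hUnbd ⟨j⁻¹ • D, hD.smul j⁻¹, ?_⟩
    intro z hz
    have h : j • z ∈ j • U := Set.smul_mem_smul_set hz
    exact Set.mem_smul_set_iff_inv_smul_mem.mpr (by simpa using hsub h)
  -- if a translate of U meets U then it equals U
  have htrans : ∀ j : J, (U ∩ j • U).Nonempty → j • U = U := by
    rintro j ⟨z, hzU, hzjU⟩
    rw [hUj] at hzjU ⊢
    rw [hUeq] at hzU
    rw [connectedComponentIn_eq hzjU, ← connectedComponentIn_eq hzU, ← hUeq]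
  set T : Set J := {j : J | (closure U ∩ j • C).Nonempty} with hTdef
  by_cases hT : T.Infinite
  · -- Case 1: infinitely many translates of C meet the closure of U
    have hmemV : ∀ j ∈ T, IsComponentOf F (j⁻¹ • U) ∧ (closure (j⁻¹ • U) ∩ C).Nonempty := by
      intro j hj
      refine ⟨⟨j⁻¹ • x₀, hx₀jF j⁻¹, hUj j⁻¹⟩, ?_⟩
      obtain ⟨z, hz1, hz2⟩ := hj
      refine ⟨j⁻¹ • z, ?_, Set.mem_smul_set_iff_inv_smul_mem.1 hz2⟩
      rw [closure_smul]
      exact Set.smul_mem_smul_set hz1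
    have hVfin := hloc C hC
    have hpigeon : ∃ V : Set Y, {j ∈ T | j⁻¹ • U = V}.Infinite := by
      by_contra h
      push_neg at h
      have hsub : T ⊆ ⋃ V ∈ {V : Set Y | IsComponentOf F V ∧ (closure V ∩ C).Nonempty},
          {j ∈ T | j⁻¹ • U = V} := by
        intro j hj
        exact Set.mem_biUnion (hmemV j hj) ⟨hj, rfl⟩
      exact hT ((hVfin.biUnion (fun V _ => h V)).subset hsub)
    obtain ⟨V, hV⟩ := hpigeon
    obtain ⟨j₀, hj₀⟩ := hV.nonempty
    have hstab : (fun j => j * j₀⁻¹) '' {j ∈ T | j⁻¹ • U = V} ⊆ {j : J | j • U = U} := by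
      rintro _ ⟨j, hj, rfl⟩
      show (j * j₀⁻¹) • U = U
      rw [mul_smul, hj₀.2, ← hj.2, smul_inv_smul]
    exact ((hV.image (Set.injOn_of_injective (mul_left_injective j₀⁻¹))).mono hstab)
  · -- Case 2: only finitely many translates of C meet the closure of U
    rw [Set.not_infinite] at hT
    set K₀ : Set Y := C ∪ ⋃ j ∈ T, j • C with hK₀def
    have hK₀comp : IsCompact K₀ := hC.union (hT.isCompact_biUnion (fun j _ => hC.smul j))
    have hK₀orb : K₀ ⊆ orbitUnion J C := by
      rintro z (hz | hz)
      · exact Set.mem_iUnion.mpr ⟨1, by simpa using hz⟩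
      · obtain ⟨j, _, hj⟩ := Set.mem_iUnion₂.mp hz
        exact Set.mem_iUnion.mpr ⟨j, hj⟩
    have hFK₀ : F ⊆ K₀ᶜ := Set.compl_subset_compl.mpr hK₀orb
    -- the frontier of U lies inside K₀
    have hUclK : closure U ∩ K₀ᶜ ⊆ U := by
      rintro x ⟨hxc, hxK⟩
      by_cases hxF : x ∈ F
      · exact hUcl ⟨hxc, hxF⟩
      · exfalso
        have hxorb : x ∈ orbitUnion J C := by
          by_contra h
          exact hxF h
        obtain ⟨i, hi⟩ := hmemOrb.mp hxorb
        have hiT : i ∈ T := ⟨x, hxc, Set.mem_smul_set_iff_inv_smul_mem.mpr hi⟩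
        exact hxK (Or.inr (Set.mem_biUnion hiT (Set.mem_smul_set_iff_inv_smul_mem.mpr hi)))
    -- U is an unbounded component of K₀ᶜ
    have hUcompK : IsComponentOf K₀ᶜ U := by
      obtain ⟨u, hu⟩ := hUne
      exact ⟨u, hFK₀ (hUF hu),
        (connectedComponentIn_eq_of_clopen (hUF.trans hFK₀) hUopen hUclK hUconn hu).symm⟩
    -- each translate j • U is an unbounded component of (j • K₀)ᶜ
    have hUjcompK : ∀ j : J, IsComponentOf (j • K₀)ᶜ (j • U) := by
      intro j
      have hsub : j • U ⊆ (j • K₀)ᶜ := by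
        rw [← Set.smul_set_compl]
        exact Set.smul_set_mono (hUF.trans hFK₀)
      have hclo : closure (j • U) ∩ (j • K₀)ᶜ ⊆ j • U := by
        rw [closure_smul, ← Set.smul_set_compl, ← Set.smul_set_inter]
        exact Set.smul_set_mono hUclK
      have hconn : IsPreconnected (j • U) := by
        rw [hUj j]; exact isPreconnected_connectedComponentIn
      obtain ⟨u, hu⟩ := hUne
      exact ⟨j • u, hsub (Set.smul_mem_smul_set hu),
        (connectedComponentIn_eq_of_clopen hsub (hUopen.smul j) hclo hconn
          (Set.smul_mem_smul_set hu)).symm⟩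
    have hS₀fin : {j : J | ((j • K₀) ∩ K₀).Nonempty}.Finite := hpd K₀ hK₀comp
    have hstab : {j : J | ((j • K₀) ∩ K₀).Nonempty}ᶜ ⊆ {j : J | j • U = U} := by
      intro j _
      have hMcomp : IsCompact (K₀ ∪ j • K₀) := hK₀comp.union (hK₀comp.smul j)
      obtain ⟨W, ⟨hWcomp, hWnbd⟩, _⟩ := hY.2 (K₀ ∪ j • K₀) hMcomp
      obtain ⟨w, hwM, hWeq⟩ := hWcomp
      have hwW : w ∈ W := hWeq ▸ mem_connectedComponentIn hwM
      have key : ∀ K' : Set Y, IsCompact K' → K' ⊆ K₀ ∪ j • K₀ → ∀ V : Set Y,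
          IsComponentOf K'ᶜ V → ¬ BoundedSubset V → W ⊆ V := by
        intro K' hK' hK'M V hVcomp hVnbd
        have hwK' : w ∈ K'ᶜ := fun h => hwM (hK'M h)
        have hWsub : W ⊆ connectedComponentIn K'ᶜ w := by
          rw [hWeq]
          exact connectedComponentIn_mono w (Set.compl_subset_compl.mpr hK'M)
        have hW'nbd : ¬ BoundedSubset (connectedComponentIn K'ᶜ w) := by
          rintro ⟨D, hD, hsub⟩
          exact hWnbd ⟨D, hD, hWsub.trans hsub⟩
        obtain ⟨Z, hZ, hZuniq⟩ := hY.2 K' hK'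
        have h1 : V = Z := hZuniq V ⟨hVcomp, hVnbd⟩
        have h2 : connectedComponentIn K'ᶜ w = Z :=
          hZuniq _ ⟨⟨w, hwK', rfl⟩, hW'nbd⟩
        rw [h1, ← h2]
        exact hWsub
      have hWU : W ⊆ U := key K₀ hK₀comp Set.subset_union_left U hUcompK hUnbd
      have hWjU : W ⊆ j • U := key (j • K₀) (hK₀comp.smul j) Set.subset_union_right
        (j • U) (hUjcompK j) (hUjnbd j)
      exact htrans j ⟨w, hWU hwW, hWjU hwW⟩
    exact (hS₀fin.infinite_compl).mono hstab
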